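/- arXiv:1904.06811 — 7 statements merged into one kernel-verified Lean document; each statement's English description precedes it below -/
import Mathlib

section
/- Let R be a commutative ring, Ψ : R_1 = R[v]/(v^2-v) → R × R the isomorphism Ψ(a + b v) = (a, a+b), extended coordinatewise to Ψ̄ : R_1^n → R^n × R^n. A subset C ⊆ R_1^n is an R_1-submodule if and only if there exist R-submodules C_1, C_2 ⊆ R^n with Ψ̄(C) = C_1 × C_2. -/
open Polynomial
set_option maxHeartbeats 1000000

/-- With `Ψ : R₁ ≅ R × R`, `Ψ(a + bv) = (a, a+b)`, extended coordinatewise to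
`Ψ̄ : R₁ⁿ → Rⁿ × Rⁿ`: a subset `C ⊆ R₁ⁿ` is an `R₁`-submodule iff there are
`R`-submodules `C₁, C₂ ⊆ Rⁿ` with `Ψ̄(C) = C₁ × C₂`. -/
theorem stmt8 (R : Type*) [CommRing R] (n : ℕ)
    (Ψ : AdjoinRoot (X ^ 2 - X : R[X]) ≃+* R × R)
    (hΨ : ∀ a b : R,
      Ψ (AdjoinRoot.of _ a + AdjoinRoot.of _ b * AdjoinRoot.root _) = (a, a + b))
    (C : Set (Fin n → AdjoinRoot (X ^ 2 - X : R[X]))) :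
    (∃ C' : Submodule (AdjoinRoot (X ^ 2 - X : R[X]))
        (Fin n → AdjoinRoot (X ^ 2 - X : R[X])), (C' : Set _) = C) ↔
    (∃ C₁ C₂ : Submodule R (Fin n → R),
      (fun c : Fin n → AdjoinRoot (X ^ 2 - X : R[X]) =>
          ((fun i => (Ψ (c i)).1, fun i => (Ψ (c i)).2) : (Fin n → R) × (Fin n → R))) '' C =
        (C₁ : Set (Fin n → R)) ×ˢ (C₂ : Set (Fin n → R))) := by
  have hof : ∀ a : R, Ψ (AdjoinRoot.of _ a) = (a, a) := by
    intro a
    simpa using hΨ a 0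
  have he : Ψ (AdjoinRoot.root (X ^ 2 - X : R[X])) = (0, 1) := by
    simpa using hΨ 0 1
  have h1e : Ψ (1 - AdjoinRoot.root (X ^ 2 - X : R[X])) = (1, 0) := by
    rw [map_sub, map_one, he]
    ext <;> simp
  constructor
  · rintro ⟨C', rfl⟩
    refine ⟨{ carrier := (fun c : Fin n → AdjoinRoot (X ^ 2 - X : R[X]) => fun i => (Ψ (c i)).1) '' C'
              add_mem' := ?_, zero_mem' := ?_, smul_mem' := ?_ },
            { carrier := (fun c : Fin n → AdjoinRoot (X ^ 2 - X : R[X]) => fun i => (Ψ (c i)).2) '' C'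
              add_mem' := ?_, zero_mem' := ?_, smul_mem' := ?_ }, ?_⟩
    · rintro x y ⟨a, ha, rfl⟩ ⟨b, hb, rfl⟩
      exact ⟨a + b, C'.add_mem ha hb, by funext i; simp [Pi.add_apply, map_add]⟩
    · exact ⟨0, C'.zero_mem, by funext i; simp⟩
    · rintro r x ⟨a, ha, rfl⟩
      refine ⟨AdjoinRoot.of _ r • a, C'.smul_mem _ ha, ?_⟩
      funext i
      simp [Pi.smul_apply, smul_eq_mul, map_mul, hof]
    · rintro x y ⟨a, ha, rfl⟩ ⟨b, hb, rfl⟩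
      exact ⟨a + b, C'.add_mem ha hb, by funext i; simp [Pi.add_apply, map_add]⟩
    · exact ⟨0, C'.zero_mem, by funext i; simp⟩
    · rintro r x ⟨a, ha, rfl⟩
      refine ⟨AdjoinRoot.of _ r • a, C'.smul_mem _ ha, ?_⟩
      funext i
      simp [Pi.smul_apply, smul_eq_mul, map_mul, hof]
    · ext ⟨x, y⟩
      simp only [Set.mem_image, Set.mem_prod]
      constructor
      · rintro ⟨c, hc, hcx⟩
        obtain ⟨h1, h2⟩ := Prod.mk.injEq .. ▸ hcx
        exact ⟨⟨c, hc, h1⟩, ⟨c, hc, h2⟩⟩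
      · rintro ⟨⟨a, ha, rfl⟩, ⟨b, hb, rfl⟩⟩
        refine ⟨(1 - AdjoinRoot.root _) • a + AdjoinRoot.root _ • b,
          C'.add_mem (C'.smul_mem _ ha) (C'.smul_mem _ hb), ?_⟩
        have hcoord : ∀ i, Ψ (((1 - AdjoinRoot.root (X ^ 2 - X : R[X])) • a
            + AdjoinRoot.root (X ^ 2 - X : R[X]) • b) i)
            = ((Ψ (a i)).1, (Ψ (b i)).2) := by
          intro i
          simp only [Pi.add_apply, Pi.smul_apply, smul_eq_mul, map_add, map_mul, h1e, he]
          ext <;> simp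
        ext i <;> simp [hcoord, he]
  · rintro ⟨C₁, C₂, hC⟩
    have hmem : ∀ c, c ∈ C ↔
        ((fun i => (Ψ (c i)).1) ∈ C₁ ∧ (fun i => (Ψ (c i)).2) ∈ C₂) := by
      intro c
      constructor
      · intro hc
        have : ((fun i => (Ψ (c i)).1, fun i => (Ψ (c i)).2) : (Fin n → R) × (Fin n → R))
            ∈ (C₁ : Set (Fin n → R)) ×ˢ (C₂ : Set (Fin n → R)) := by
          rw [← hC]; exact ⟨c, hc, rfl⟩
        exact this
      · rintro ⟨h1, h2⟩
        have : ((fun i => (Ψ (c i)).1, fun i => (Ψ (c i)).2) : (Fin n → R) × (Fin n → R))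
            ∈ (fun c : Fin n → AdjoinRoot (X ^ 2 - X : R[X]) =>
              ((fun i => (Ψ (c i)).1, fun i => (Ψ (c i)).2) :
                (Fin n → R) × (Fin n → R))) '' C := by
          rw [hC]; exact ⟨h1, h2⟩
        obtain ⟨c', hc', hcc⟩ := this
        obtain ⟨e1, e2⟩ := Prod.mk.injEq .. ▸ hcc
        have : c' = c := by
          funext i
          apply Ψ.injective
          ext
          · exact congrFun e1 i
          · exact congrFun e2 i
        rwa [← this]
    refine ⟨{ carrier := C, add_mem' := ?_, zero_mem' := ?_, smul_mem' := ?_ }, rfl⟩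
    · intro a b ha hb
      rw [hmem] at ha hb ⊢
      constructor
      · have := C₁.add_mem ha.1 hb.1
        convert this using 1
        funext i; simp [Pi.add_apply, map_add]
      · have := C₂.add_mem ha.2 hb.2
        convert this using 1
        funext i; simp [Pi.add_apply, map_add]
    · rw [hmem]
      constructor
      · have := C₁.zero_mem
        convert this using 1
        funext i; simp
      · have := C₂.zero_mem
        convert this using 1
        funext i; simp
    · intro s x hx
      rw [hmem] at hx ⊢
      constructor
      · have := C₁.smul_mem (Ψ s).1 hx.1
        convert this using 1
        funext i; simp [Pi.smul_apply, smul_eq_mul, map_mul]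
      · have := C₂.smul_mem (Ψ s).2 hx.2
        convert this using 1
        funext i; simp [Pi.smul_apply, smul_eq_mul, map_mul]
end

section
/- Let R be a finite commutative ring with Ψ̄ : R_1^n ≅ R^n × R^n as above. If C = Ψ̄^{-1}(C_1 × C_2) for linear codes C_1, C_2 over R (both nonzero), then the minimum Hamming distance of C equals the minimum of the minimum Hamming distances of C_1 and C_2. -/
open Polynomial
set_option maxHeartbeats 1000000

private lemma card_le_of_imp {n : ℕ} (p q : Fin n → Prop) (h : ∀ i, p i → q i) :
    Nat.card {i : Fin n // p i} ≤ Nat.card {i : Fin n // q i} :=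
  Nat.card_le_card_of_injective (fun x => ⟨x.1, h _ x.2⟩)
    (by intro a b hab; cases a; cases b; simpa using hab)

/-- If `C = Ψ̄⁻¹(C₁ × C₂)` for nonzero linear codes `C₁, C₂` over a finite commutative
ring `R`, then the minimum Hamming distance of `C` is the minimum of those of `C₁`
and `C₂`.  (Hamming weight of `x` is the number of nonzero coordinates.) -/
theorem stmt9 (R : Type*) [CommRing R] [Finite R] (n : ℕ)
    (Ψ : AdjoinRoot (X ^ 2 - X : R[X]) ≃+* R × R)
    (hΨ : ∀ a b : R,
      Ψ (AdjoinRoot.of _ a + AdjoinRoot.of _ b * AdjoinRoot.root _) = (a, a + b))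
    (C₁ C₂ : Submodule R (Fin n → R)) (h₁ : C₁ ≠ ⊥) (h₂ : C₂ ≠ ⊥)
    (C : Set (Fin n → AdjoinRoot (X ^ 2 - X : R[X])))
    (hC : C = {c | (fun i => (Ψ (c i)).1) ∈ C₁ ∧ (fun i => (Ψ (c i)).2) ∈ C₂}) :
    sInf {d : ℕ | ∃ c ∈ C, c ≠ 0 ∧ Nat.card {i : Fin n // c i ≠ 0} = d} =
      min (sInf {d : ℕ | ∃ c ∈ C₁, c ≠ 0 ∧ Nat.card {i : Fin n // c i ≠ 0} = d})
        (sInf {d : ℕ | ∃ c ∈ C₂, c ≠ 0 ∧ Nat.card {i : Fin n // c i ≠ 0} = d}) := by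
  subst hC
  set A := {d : ℕ | ∃ c ∈ {c : Fin n → AdjoinRoot (X ^ 2 - X : R[X]) |
      (fun i => (Ψ (c i)).1) ∈ C₁ ∧ (fun i => (Ψ (c i)).2) ∈ C₂},
      c ≠ 0 ∧ Nat.card {i : Fin n // c i ≠ 0} = d} with hA
  set B₁ := {d : ℕ | ∃ c ∈ C₁, c ≠ 0 ∧ Nat.card {i : Fin n // c i ≠ 0} = d} with hB₁
  set B₂ := {d : ℕ | ∃ c ∈ C₂, c ≠ 0 ∧ Nat.card {i : Fin n // c i ≠ 0} = d} with hB₂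
  -- embedding of a C₁ codeword
  have key₁ : ∀ x ∈ C₁, x ≠ 0 → Nat.card {i : Fin n // x i ≠ 0} ∈ A := by
    intro x hx hx0
    have hiff : ∀ i, (Ψ.symm (x i, (0:R)) = 0) ↔ x i = 0 := by
      intro i
      rw [map_eq_zero_iff Ψ.symm Ψ.symm.injective, Prod.mk_eq_zero]
      simp
    refine ⟨fun i => Ψ.symm (x i, 0), ⟨?_, ?_⟩, ?_, ?_⟩
    · have : (fun i => (Ψ (Ψ.symm (x i, 0))).1) = x := by
        funext i; simp
      rw [this]; exact hx
    · have : (fun i => (Ψ (Ψ.symm (x i, 0))).2) = 0 := by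
        funext i; simp
      rw [this]; exact Submodule.zero_mem C₂
    · intro hcon
      obtain ⟨i, hi⟩ := Function.ne_iff.mp hx0
      have h0 : Ψ.symm (x i, (0:R)) = 0 := by simpa using congrFun hcon i
      exact hi ((hiff i).mp h0)
    · exact Nat.card_congr (Equiv.subtypeEquivRight fun i => not_congr (hiff i))
  have key₂ : ∀ x ∈ C₂, x ≠ 0 → Nat.card {i : Fin n // x i ≠ 0} ∈ A := by
    intro x hx hx0
    have hiff : ∀ i, (Ψ.symm ((0:R), x i) = 0) ↔ x i = 0 := by
      intro i
      rw [map_eq_zero_iff Ψ.symm Ψ.symm.injective, Prod.mk_eq_zero]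
      simp
    refine ⟨fun i => Ψ.symm (0, x i), ⟨?_, ?_⟩, ?_, ?_⟩
    · have : (fun i => (Ψ (Ψ.symm ((0:R), x i))).1) = 0 := by
        funext i; simp
      rw [this]; exact Submodule.zero_mem C₁
    · have : (fun i => (Ψ (Ψ.symm ((0:R), x i))).2) = x := by
        funext i; simp
      rw [this]; exact hx
    · intro hcon
      obtain ⟨i, hi⟩ := Function.ne_iff.mp hx0
      have h0 : Ψ.symm ((0:R), x i) = 0 := by simpa using congrFun hcon i
      exact hi ((hiff i).mp h0)
    · exact Nat.card_congr (Equiv.subtypeEquivRight fun i => not_congr (hiff i))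
  obtain ⟨x₀, hx₀, hx₀0⟩ := (Submodule.ne_bot_iff C₁).mp h₁
  obtain ⟨y₀, hy₀, hy₀0⟩ := (Submodule.ne_bot_iff C₂).mp h₂
  have hB₁ne : B₁.Nonempty := ⟨_, x₀, hx₀, hx₀0, rfl⟩
  have hB₂ne : B₂.Nonempty := ⟨_, y₀, hy₀, hy₀0, rfl⟩
  have hAne : A.Nonempty := ⟨_, key₁ x₀ hx₀ hx₀0⟩
  apply le_antisymm
  · refine le_min ?_ ?_
    · obtain ⟨x, hx, hx0, hcard⟩ := Nat.sInf_mem hB₁ne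
      exact hcard ▸ Nat.sInf_le (key₁ x hx hx0)
    · obtain ⟨x, hx, hx0, hcard⟩ := Nat.sInf_mem hB₂ne
      exact hcard ▸ Nat.sInf_le (key₂ x hx hx0)
  · obtain ⟨c, ⟨hc1, hc2⟩, hc0, hcard⟩ := Nat.sInf_mem hAne
    obtain ⟨i, hi⟩ := Function.ne_iff.mp hc0
    have hΨi : Ψ (c i) ≠ 0 := fun h => hi (by simpa using Ψ.injective (by simpa using h))
    have hzero : ∀ (j : Fin n), c j = 0 → Ψ (c j) = 0 := fun j h => by simp [h]
    rcases (by
      by_contra h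
      push_neg at h
      exact hΨi (Prod.ext h.1 h.2) : (Ψ (c i)).1 ≠ 0 ∨ (Ψ (c i)).2 ≠ 0) with h | h
    · have hxne : (fun i => (Ψ (c i)).1) ≠ 0 := fun hcon => h (congrFun hcon i)
      have hw : Nat.card {j : Fin n // (Ψ (c j)).1 ≠ 0} ∈ B₁ := ⟨_, hc1, hxne, rfl⟩
      have hle : Nat.card {j : Fin n // (Ψ (c j)).1 ≠ 0} ≤ Nat.card {j : Fin n // c j ≠ 0} :=
        card_le_of_imp _ _ fun j hj hcj => hj (by simp [hcj])
      calc min (sInf B₁) (sInf B₂) ≤ sInf B₁ := min_le_left _ _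
        _ ≤ _ := Nat.sInf_le hw
        _ ≤ _ := hle
        _ = sInf A := hcard
    · have hxne : (fun i => (Ψ (c i)).2) ≠ 0 := fun hcon => h (congrFun hcon i)
      have hw : Nat.card {j : Fin n // (Ψ (c j)).2 ≠ 0} ∈ B₂ := ⟨_, hc2, hxne, rfl⟩
      have hle : Nat.card {j : Fin n // (Ψ (c j)).2 ≠ 0} ≤ Nat.card {j : Fin n // c j ≠ 0} :=
        card_le_of_imp _ _ fun j hj hcj => hj (by simp [hcj])
      calc min (sInf B₁) (sInf B₂) ≤ sInf B₂ := min_le_right _ _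
        _ ≤ _ := Nat.sInf_le hw
        _ ≤ _ := hle
        _ = sInf A := hcard
end

section
/- Let R be a commutative ring and Ψ̄ : R_1^n ≅ R^n × R^n the coordinatewise extension of Ψ(a + b v) = (a, a+b). A submodule C ⊆ R_1^n with Ψ̄(C) = C_1 × C_2 is cyclic (invariant under the cyclic shift) if and only if both C_1 and C_2 are cyclic codes over R. -/
open Polynomial
set_option maxHeartbeats 1000000

/-- With `Ψ̄ : R₁ⁿ ≅ Rⁿ × Rⁿ` and `Ψ̄(C) = C₁ × C₂`, the code `C` is cyclic
(invariant under the cyclic shift `c ↦ (i ↦ c (i-1))`) iff `C₁` and `C₂` are cyclic. -/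
theorem stmt10 (R : Type*) [CommRing R] (n : ℕ) [NeZero n]
    (Ψ : AdjoinRoot (X ^ 2 - X : R[X]) ≃+* R × R)
    (hΨ : ∀ a b : R,
      Ψ (AdjoinRoot.of _ a + AdjoinRoot.of _ b * AdjoinRoot.root _) = (a, a + b))
    (C : Submodule (AdjoinRoot (X ^ 2 - X : R[X])) (Fin n → AdjoinRoot (X ^ 2 - X : R[X])))
    (C₁ C₂ : Submodule R (Fin n → R))
    (hC : (fun c : Fin n → AdjoinRoot (X ^ 2 - X : R[X]) =>
        ((fun i => (Ψ (c i)).1, fun i => (Ψ (c i)).2) : (Fin n → R) × (Fin n → R))) ''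
          (C : Set _) = (C₁ : Set (Fin n → R)) ×ˢ (C₂ : Set (Fin n → R))) :
    ((fun c : Fin n → AdjoinRoot (X ^ 2 - X : R[X]) => fun i => c (i - 1)) '' (C : Set _)
        = (C : Set _)) ↔
      ((fun c : Fin n → R => fun i => c (i - 1)) '' (C₁ : Set _) = (C₁ : Set _) ∧
       (fun c : Fin n → R => fun i => c (i - 1)) '' (C₂ : Set _) = (C₂ : Set _)) := by
  classical
  set R1 := AdjoinRoot (X ^ 2 - X : R[X]) with hR1
  set F : (Fin n → R1) → (Fin n → R) × (Fin n → R) :=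
    fun c => (fun i => (Ψ (c i)).1, fun i => (Ψ (c i)).2) with hF
  have hFinj : Function.Injective F := by
    intro c c' h
    funext i
    apply Ψ.injective
    have h1 := congrFun (congrArg Prod.fst h) i
    have h2 := congrFun (congrArg Prod.snd h) i
    exact Prod.ext h1 h2
  have key : ∀ S : Set (Fin n → R1),
      F '' ((fun c : Fin n → R1 => fun i => c (i - 1)) '' S)
        = (fun p : (Fin n → R) × (Fin n → R) =>
            ((fun c : Fin n → R => fun i => c (i - 1)) p.1,
             (fun c : Fin n → R => fun i => c (i - 1)) p.2)) '' (F '' S) := by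
    intro S
    rw [← Set.image_comp, ← Set.image_comp]
    rfl
  have prodim : ∀ A B : Set (Fin n → R),
      (fun p : (Fin n → R) × (Fin n → R) =>
          ((fun c : Fin n → R => fun i => c (i - 1)) p.1,
           (fun c : Fin n → R => fun i => c (i - 1)) p.2)) '' (A ×ˢ B)
        = ((fun c : Fin n → R => fun i => c (i - 1)) '' A) ×ˢ
          ((fun c : Fin n → R => fun i => c (i - 1)) '' B) := by
    intro A B
    exact (Set.prod_image_image_eq (m₁ := fun c : Fin n → R => fun i => c (i - 1))
      (m₂ := fun c : Fin n → R => fun i => c (i - 1))).symm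
  have h0 : F 0 = (0, 0) := by
    refine Prod.ext ?_ ?_ <;> funext i <;> simp [hF]
  have h00 : ((0, 0) : (Fin n → R) × (Fin n → R)) ∈ (C₁ : Set _) ×ˢ (C₂ : Set _) := by
    rw [← hC]
    exact ⟨0, C.zero_mem, h0⟩
  constructor
  · intro h
    have himg := congrArg (Set.image F) h
    rw [key, hC, prodim] at himg
    have hz1 : (0 : Fin n → R) ∈ (fun c : Fin n → R => fun i => c (i - 1)) '' (C₁ : Set _) :=
      ⟨0, h00.1, rfl⟩
    have hz2 : (0 : Fin n → R) ∈ (fun c : Fin n → R => fun i => c (i - 1)) '' (C₂ : Set _) :=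
      ⟨0, h00.2, rfl⟩
    constructor
    · ext x
      constructor
      · intro hx
        exact ((himg ▸ Set.mk_mem_prod hx hz2 :
          (x, (0:Fin n → R)) ∈ (C₁:Set _) ×ˢ (C₂:Set _))).1
      · intro hx
        exact ((himg.symm ▸ Set.mk_mem_prod hx h00.2 :
          (x, (0:Fin n → R)) ∈ _ ×ˢ _)).1
    · ext x
      constructor
      · intro hx
        exact ((himg ▸ Set.mk_mem_prod hz1 hx :
          ((0:Fin n → R), x) ∈ (C₁:Set _) ×ˢ (C₂:Set _))).2
      · intro hx
        exact ((himg.symm ▸ Set.mk_mem_prod h00.1 hx :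
          ((0:Fin n → R), x) ∈ _ ×ˢ _)).2
  · rintro ⟨h1, h2⟩
    apply hFinj.image_injective
    rw [key, hC, prodim, h1, h2]
end

section
/- Let R be a commutative ring, n = m d, and φ̄ : R_1^n → R_0^{n l} the blockwise extension of the Gray map φ (with φ as above, R_0 = R). If C ⊆ R_1^n is a quasi-cyclic code of index d (with respect to blocks of length m), then φ̄(C) is a quasi-cyclic code of index l·d of length n l over R, and conversely. -/
open Polynomial
set_option maxHeartbeats 4000000

/-- Vectors of length `n = m·d` over `R₁` are modelled as `Fin d → Fin m → R₁`, and the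
Gray image (via `φ(a+bv) = (a, β₁a+β₁'b, …)`) as `l·d` blocks of length `m`, i.e.
`Fin l → Fin d → Fin m → R`.  A linear code `C` over `R₁` is quasi-cyclic of index `d`
iff `φ̄(C)` is quasi-cyclic of index `l·d` over `R`. -/
theorem stmt13 (R : Type*) [CommRing R] (m d l : ℕ) [NeZero m] (hl : 2 ≤ l)
    (β β' : Fin l → R) (hβ' : IsUnit (β' ⟨l - 1, by omega⟩))
    (Ψ : AdjoinRoot (X ^ 2 - X : R[X]) ≃+* R × R)
    (hΨ : ∀ a b : R,
      Ψ (AdjoinRoot.of _ a + AdjoinRoot.of _ b * AdjoinRoot.root _) = (a, a + b))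
    (C : Submodule (AdjoinRoot (X ^ 2 - X : R[X]))
      (Fin d → Fin m → AdjoinRoot (X ^ 2 - X : R[X])))
    (φbar : (Fin d → Fin m → AdjoinRoot (X ^ 2 - X : R[X])) → Fin l → Fin d → Fin m → R)
    (hφbar : ∀ c, φbar c = fun r j i =>
      if r.val = 0 then (Ψ (c j i)).1
      else β r * (Ψ (c j i)).1 + β' r * ((Ψ (c j i)).2 - (Ψ (c j i)).1)) :
    ((fun c : Fin d → Fin m → AdjoinRoot (X ^ 2 - X : R[X]) => fun j i => c j (i - 1)) ''
        (C : Set _) = (C : Set _)) ↔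
      ((fun y : Fin l → Fin d → Fin m → R => fun r j i => y r j (i - 1)) ''
        (φbar '' (C : Set _)) = φbar '' (C : Set _)) := by
  set S := (fun c : Fin d → Fin m → AdjoinRoot (X ^ 2 - X : R[X]) => fun j i => c j (i - 1))
    with hS
  set T := (fun y : Fin l → Fin d → Fin m → R => fun r j i => y r j (i - 1)) with hT
  -- φbar commutes with the shift
  have hcomm : ∀ c, φbar (S c) = T (φbar c) := by
    intro c
    rw [hφbar, hφbar]
  -- φbar is injective
  have hinj : Function.Injective φbar := by
    intro c c' h
    funext j i
    have hne : ((⟨l - 1, by omega⟩ : Fin l) : ℕ) ≠ 0 := by simp; omega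
    have h0 : (Ψ (c j i)).1 = (Ψ (c' j i)).1 := by
      have h0' : φbar c ⟨0, by omega⟩ j i = φbar c' ⟨0, by omega⟩ j i := by rw [h]
      rw [hφbar, hφbar] at h0'
      simpa using h0'
    have h1 : β ⟨l - 1, by omega⟩ * (Ψ (c j i)).1 +
        β' ⟨l - 1, by omega⟩ * ((Ψ (c j i)).2 - (Ψ (c j i)).1) =
        β ⟨l - 1, by omega⟩ * (Ψ (c' j i)).1 +
        β' ⟨l - 1, by omega⟩ * ((Ψ (c' j i)).2 - (Ψ (c' j i)).1) := by
      have h1' : φbar c ⟨l - 1, by omega⟩ j i = φbar c' ⟨l - 1, by omega⟩ j i := by rw [h]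
      rw [hφbar, hφbar] at h1'
      simpa only [if_neg hne] using h1'
    rw [h0] at h1
    have h2 : (Ψ (c j i)).2 - (Ψ (c' j i)).1 = (Ψ (c' j i)).2 - (Ψ (c' j i)).1 :=
      hβ'.mul_left_cancel (add_left_cancel h1)
    have : Ψ (c j i) = Ψ (c' j i) := Prod.ext h0 (sub_left_inj.mp h2)
    exact Ψ.injective this
  have key : T '' (φbar '' (C : Set _)) = φbar '' (S '' (C : Set _)) := by
    have hc : T ∘ φbar = φbar ∘ S := funext fun c => (hcomm c).symm
    rw [← Set.image_comp, ← Set.image_comp, hc]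
  constructor
  · intro hC
    rw [key, hC]
  · intro hC
    exact Set.image_injective.mpr hinj (key.symm.trans hC)
end

section
/- Let R be a finite commutative ring and Ψ̄ : R_1^n ≅ R^n × R^n as above, where the Euclidean inner product on S^n is x·y = Σ_i x_i y_i. For submodules C_1, C_2 ⊆ R^n and C = Ψ̄^{-1}(C_1 × C_2), the Euclidean dual satisfies C^⊥ = Ψ̄^{-1}(C_1^⊥ × C_2^⊥). In particular, C is Euclidean self-dual if and only if C_1 and C_2 are both Euclidean self-dual. -/
open Polynomial
set_option maxHeartbeats 1000000

/-- For `C = Ψ̄⁻¹(C₁ × C₂)`, the Euclidean dual satisfies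
`C^⊥ = Ψ̄⁻¹(C₁^⊥ × C₂^⊥)`; in particular `C` is Euclidean self-dual iff `C₁` and `C₂`
are. -/
theorem stmt14 (R : Type*) [CommRing R] [Finite R] (n : ℕ)
    (Ψ : AdjoinRoot (X ^ 2 - X : R[X]) ≃+* R × R)
    (hΨ : ∀ a b : R,
      Ψ (AdjoinRoot.of _ a + AdjoinRoot.of _ b * AdjoinRoot.root _) = (a, a + b))
    (C₁ C₂ : Submodule R (Fin n → R))
    (C : Set (Fin n → AdjoinRoot (X ^ 2 - X : R[X])))
    (hC : C = {c | (fun i => (Ψ (c i)).1) ∈ C₁ ∧ (fun i => (Ψ (c i)).2) ∈ C₂}) :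
    ({y | ∀ x ∈ C, ∑ i, x i * y i = 0} : Set (Fin n → AdjoinRoot (X ^ 2 - X : R[X]))) =
      {y | (fun i => (Ψ (y i)).1) ∈ {z : Fin n → R | ∀ x ∈ C₁, ∑ i, x i * z i = 0} ∧
           (fun i => (Ψ (y i)).2) ∈ {z : Fin n → R | ∀ x ∈ C₂, ∑ i, x i * z i = 0}} ∧
    (C = {y | ∀ x ∈ C, ∑ i, x i * y i = 0} ↔
      ((C₁ : Set (Fin n → R)) = {z | ∀ x ∈ C₁, ∑ i, x i * z i = 0} ∧
       (C₂ : Set (Fin n → R)) = {z | ∀ x ∈ C₂, ∑ i, x i * z i = 0})) := by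
  -- the key computation: the inner product vanishes iff both component
  -- inner products vanish
  have key : ∀ (x y : Fin n → AdjoinRoot (X ^ 2 - X : R[X])),
      (∑ i, x i * y i = 0) ↔
      (∑ i, (Ψ (x i)).1 * (Ψ (y i)).1 = 0 ∧ ∑ i, (Ψ (x i)).2 * (Ψ (y i)).2 = 0) := by
    intro x y
    constructor
    · intro h
      have h' : Ψ (∑ i, x i * y i) = 0 := by rw [h]; exact map_zero Ψ
      rw [map_sum] at h'
      simp only [map_mul] at h'
      rw [Prod.ext_iff] at h'
      simpa [Prod.fst_sum, Prod.snd_sum] using h'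
    · intro ⟨h1, h2⟩
      apply Ψ.injective
      rw [map_sum, map_zero]
      simp only [map_mul]
      rw [Prod.ext_iff]
      simp [Prod.fst_sum, Prod.snd_sum, h1, h2]
  -- the dual description
  have main : ({y | ∀ x ∈ C, ∑ i, x i * y i = 0} :
        Set (Fin n → AdjoinRoot (X ^ 2 - X : R[X]))) =
      {y | (fun i => (Ψ (y i)).1) ∈ {z : Fin n → R | ∀ x ∈ C₁, ∑ i, x i * z i = 0} ∧
           (fun i => (Ψ (y i)).2) ∈ {z : Fin n → R | ∀ x ∈ C₂, ∑ i, x i * z i = 0}} := by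
    ext y
    simp only [Set.mem_setOf_eq, hC]
    constructor
    · intro h
      constructor
      · intro x₁ hx₁
        have hm : (fun i => (Ψ ((fun i => Ψ.symm (x₁ i, 0)) i)).1) ∈ C₁ ∧
            (fun i => (Ψ ((fun i => Ψ.symm (x₁ i, 0)) i)).2) ∈ C₂ := by
          simp only [Ψ.apply_symm_apply]
          exact ⟨hx₁, C₂.zero_mem⟩
        have := (key _ y).1 (h _ hm)
        simpa [Ψ.apply_symm_apply] using this.1
      · intro x₂ hx₂
        have hm : (fun i => (Ψ ((fun i => Ψ.symm (0, x₂ i)) i)).1) ∈ C₁ ∧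
            (fun i => (Ψ ((fun i => Ψ.symm (0, x₂ i)) i)).2) ∈ C₂ := by
          simp only [Ψ.apply_symm_apply]
          exact ⟨C₁.zero_mem, hx₂⟩
        have := (key _ y).1 (h _ hm)
        simpa [Ψ.apply_symm_apply] using this.2
    · intro ⟨h1, h2⟩ x hx
      exact (key x y).2 ⟨h1 _ hx.1, h2 _ hx.2⟩
  refine ⟨main, ?_, ?_⟩
  · -- C self-dual → C₁, C₂ self-dual
    intro hsd
    have hsd' := hsd.trans main
    constructor
    · ext u
      simp only [SetLike.mem_coe, Set.mem_setOf_eq]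
      constructor
      · intro hu
        have hmem : (fun i => Ψ.symm (u i, 0)) ∈ C := by
          rw [hC]
          simp only [Set.mem_setOf_eq, Ψ.apply_symm_apply]
          exact ⟨hu, C₂.zero_mem⟩
        rw [hsd'] at hmem
        simpa [Ψ.apply_symm_apply] using hmem.1
      · intro hu
        have hmem : (fun i => Ψ.symm (u i, 0)) ∈
            ({y | (fun i => (Ψ (y i)).1) ∈ {z : Fin n → R | ∀ x ∈ C₁, ∑ i, x i * z i = 0} ∧
              (fun i => (Ψ (y i)).2) ∈ {z : Fin n → R | ∀ x ∈ C₂, ∑ i, x i * z i = 0}} :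
              Set (Fin n → AdjoinRoot (X ^ 2 - X : R[X]))) := by
          simp only [Set.mem_setOf_eq, Ψ.apply_symm_apply]
          exact ⟨hu, fun x hx => by simp⟩
        rw [← hsd', hC] at hmem
        simpa [Ψ.apply_symm_apply] using hmem.1
    · ext w
      simp only [SetLike.mem_coe, Set.mem_setOf_eq]
      constructor
      · intro hw
        have hmem : (fun i => Ψ.symm (0, w i)) ∈ C := by
          rw [hC]
          simp only [Set.mem_setOf_eq, Ψ.apply_symm_apply]
          exact ⟨C₁.zero_mem, hw⟩
        rw [hsd'] at hmem
        simpa [Ψ.apply_symm_apply] using hmem.2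
      · intro hw
        have hmem : (fun i => Ψ.symm (0, w i)) ∈
            ({y | (fun i => (Ψ (y i)).1) ∈ {z : Fin n → R | ∀ x ∈ C₁, ∑ i, x i * z i = 0} ∧
              (fun i => (Ψ (y i)).2) ∈ {z : Fin n → R | ∀ x ∈ C₂, ∑ i, x i * z i = 0}} :
              Set (Fin n → AdjoinRoot (X ^ 2 - X : R[X]))) := by
          simp only [Set.mem_setOf_eq, Ψ.apply_symm_apply]
          exact ⟨fun x hx => by simp, hw⟩
        rw [← hsd', hC] at hmem
        simpa [Ψ.apply_symm_apply] using hmem.2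
  · -- converse
    intro ⟨h1, h2⟩
    rw [main, hC]
    ext y
    simp only [Set.mem_setOf_eq]
    constructor
    · intro ⟨ha, hb⟩
      exact ⟨by rw [← SetLike.mem_coe, h1] at ha; exact ha,
             by rw [← SetLike.mem_coe, h2] at hb; exact hb⟩
    · intro ⟨ha, hb⟩
      exact ⟨by rw [← SetLike.mem_coe, h1]; exact ha,
             by rw [← SetLike.mem_coe, h2]; exact hb⟩
end

section
/- Let R be a finite commutative ring and R_1 = R[v]/(v^2 - v) with conjugation σ(v) = 1 - v. If C ⊆ R_1^n is a Hermitian self-dual code and C = v C_1 + (1-v) C_2 for linear codes C_1, C_2 ⊆ R^n, then C_2 = C_1^⊥ (Euclidean dual); hence C is isomorphic as an R-module to C_1 × C_1^⊥. -/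
open Polynomial
set_option maxHeartbeats 1000000

section Aux
variable {R : Type*} [CommRing R]

private lemma aux_hw2 :
    AdjoinRoot.root (X ^ 2 - X : R[X]) * AdjoinRoot.root (X ^ 2 - X : R[X])
      = AdjoinRoot.root (X ^ 2 - X : R[X]) := by
  have h := AdjoinRoot.eval₂_root (X ^ 2 - X : R[X])
  simpa [sub_eq_zero, pow_two] using h

private lemma aux_h1 : (X ^ 2 - X : R[X]).eval₂ (RingHom.id R) 1 = 0 := by simp

private lemma aux_h0 : (X ^ 2 - X : R[X]).eval₂ (RingHom.id R) 0 = 0 := by simp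

private lemma aux_hw0 (s : R)
    (h : AdjoinRoot.root (X ^ 2 - X : R[X]) * AdjoinRoot.of _ s = 0) : s = 0 := by
  have := congrArg (AdjoinRoot.lift (RingHom.id R) 1 aux_h1) h
  simpa [AdjoinRoot.lift_root, AdjoinRoot.lift_of] using this

private lemma aux_key (a b a' b' : R)
    (h : AdjoinRoot.root (X ^ 2 - X : R[X]) * AdjoinRoot.of _ a
        + (1 - AdjoinRoot.root (X ^ 2 - X : R[X])) * AdjoinRoot.of _ b
      = AdjoinRoot.root (X ^ 2 - X : R[X]) * AdjoinRoot.of _ a'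
        + (1 - AdjoinRoot.root (X ^ 2 - X : R[X])) * AdjoinRoot.of _ b') :
    a = a' ∧ b = b' := by
  have e0 := congrArg (AdjoinRoot.lift (RingHom.id R) 0 aux_h0) h
  have e1 := congrArg (AdjoinRoot.lift (RingHom.id R) 1 aux_h1) h
  simp [AdjoinRoot.lift_root, AdjoinRoot.lift_of] at e0 e1
  exact ⟨e1, e0⟩

end Aux


/-- If `C ⊆ R₁ⁿ` is Hermitian self-dual (w.r.t. the conjugation `σ` swapping `v` and
`1-v`) and `C = v C₁ + (1-v) C₂` for linear codes `C₁, C₂ ⊆ Rⁿ`, then `C₂ = C₁^⊥`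
(Euclidean dual), and `C` is isomorphic as an `R`-module to `C₁ × C₂ = C₁ × C₁^⊥`. -/
theorem stmt15 (R : Type*) [CommRing R] [Finite R] (n : ℕ)
    (σ : AdjoinRoot (X ^ 2 - X : R[X]) →+* AdjoinRoot (X ^ 2 - X : R[X]))
    (hσR : ∀ a : R, σ (AdjoinRoot.of _ a) = AdjoinRoot.of _ a)
    (hσv : σ (AdjoinRoot.root _) = 1 - AdjoinRoot.root _)
    (C : Submodule (AdjoinRoot (X ^ 2 - X : R[X])) (Fin n → AdjoinRoot (X ^ 2 - X : R[X])))
    (C₁ C₂ : Submodule R (Fin n → R))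
    (hdecomp : (C : Set _) = {c | ∃ a ∈ C₁, ∃ b ∈ C₂, c = fun i =>
      AdjoinRoot.root (X ^ 2 - X : R[X]) * AdjoinRoot.of _ (a i)
        + (1 - AdjoinRoot.root (X ^ 2 - X : R[X])) * AdjoinRoot.of _ (b i)})
    (hsd : ∀ y : Fin n → AdjoinRoot (X ^ 2 - X : R[X]),
      y ∈ C ↔ ∀ x ∈ C, ∑ i, x i * σ (y i) = 0) :
    (C₂ : Set (Fin n → R)) = {z | ∀ x ∈ C₁, ∑ i, x i * z i = 0} ∧
    Nonempty ((C.restrictScalars R) ≃ₗ[R] (C₁ × C₂)) := by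
  have hσ1w : σ (1 - AdjoinRoot.root (X ^ 2 - X : R[X])) = AdjoinRoot.root (X ^ 2 - X : R[X]) := by
    rw [map_sub, map_one, hσv]; ring
  -- term computation
  have hterm : ∀ a b z : R,
      (AdjoinRoot.root (X ^ 2 - X : R[X]) * AdjoinRoot.of _ a
        + (1 - AdjoinRoot.root (X ^ 2 - X : R[X])) * AdjoinRoot.of _ b)
        * σ ((1 - AdjoinRoot.root (X ^ 2 - X : R[X])) * AdjoinRoot.of _ z)
      = AdjoinRoot.root (X ^ 2 - X : R[X]) * AdjoinRoot.of _ (a * z) := by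
    intro a b z
    rw [map_mul, hσ1w, hσR, map_mul]
    linear_combination (AdjoinRoot.of (X ^ 2 - X : R[X]) a * AdjoinRoot.of _ z
      - AdjoinRoot.of (X ^ 2 - X : R[X]) b * AdjoinRoot.of _ z) * (aux_hw2 (R := R))
  have hsum : ∀ (a b z : Fin n → R),
      (∑ i, (AdjoinRoot.root (X ^ 2 - X : R[X]) * AdjoinRoot.of _ (a i)
        + (1 - AdjoinRoot.root (X ^ 2 - X : R[X])) * AdjoinRoot.of _ (b i))
        * σ ((1 - AdjoinRoot.root (X ^ 2 - X : R[X])) * AdjoinRoot.of _ (z i)))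
      = AdjoinRoot.root (X ^ 2 - X : R[X]) * AdjoinRoot.of _ (∑ i, a i * z i) := by
    intro a b z
    rw [map_sum, Finset.mul_sum]
    exact Finset.sum_congr rfl fun i _ => hterm (a i) (b i) (z i)
  have hmem2 : ∀ z : Fin n → R, z ∈ C₂ →
      (fun i => (1 - AdjoinRoot.root (X ^ 2 - X : R[X])) * AdjoinRoot.of _ (z i)) ∈ C := by
    intro z hz
    rw [← SetLike.mem_coe, hdecomp]
    exact ⟨0, C₁.zero_mem, z, hz, funext fun i => by simp⟩
  have hmem1 : ∀ a : Fin n → R, a ∈ C₁ →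
      (fun i => AdjoinRoot.root (X ^ 2 - X : R[X]) * AdjoinRoot.of _ (a i)) ∈ C := by
    intro a ha
    rw [← SetLike.mem_coe, hdecomp]
    exact ⟨a, ha, 0, C₂.zero_mem, funext fun i => by simp⟩
  have part1 : (C₂ : Set (Fin n → R)) = {z | ∀ x ∈ C₁, ∑ i, x i * z i = 0} := by
    ext z
    constructor
    · intro hz a ha
      have hx := (hsd _).mp (hmem2 z hz) _ (hmem1 a ha)
      have h2 : (∑ i, (AdjoinRoot.root (X ^ 2 - X : R[X]) * AdjoinRoot.of _ (a i)
          + (1 - AdjoinRoot.root (X ^ 2 - X : R[X])) * AdjoinRoot.of _ ((0 : Fin n → R) i))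
          * σ ((1 - AdjoinRoot.root (X ^ 2 - X : R[X])) * AdjoinRoot.of _ (z i))) = 0 := by
        simpa using hx
      rw [hsum] at h2
      exact aux_hw0 _ h2
    · intro hz
      have hy : (fun i => (1 - AdjoinRoot.root (X ^ 2 - X : R[X]))
          * AdjoinRoot.of _ (z i)) ∈ C := by
        rw [hsd]
        intro x hx
        rw [← SetLike.mem_coe, hdecomp] at hx
        obtain ⟨a, ha, b, hb, rfl⟩ := hx
        rw [hsum, hz a ha, map_zero, mul_zero]
      rw [← SetLike.mem_coe, hdecomp] at hy
      obtain ⟨a, ha, b, hb, heq⟩ := hy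
      have heqi : ∀ i, AdjoinRoot.root (X ^ 2 - X : R[X])
            * AdjoinRoot.of _ ((0 : Fin n → R) i)
          + (1 - AdjoinRoot.root (X ^ 2 - X : R[X])) * AdjoinRoot.of _ (z i)
        = AdjoinRoot.root (X ^ 2 - X : R[X]) * AdjoinRoot.of _ (a i)
          + (1 - AdjoinRoot.root (X ^ 2 - X : R[X])) * AdjoinRoot.of _ (b i) := by
        intro i
        have := congrFun heq i
        simpa using this
      have hzb : z = b := funext fun i => (aux_key _ _ _ _ (heqi i)).2
      rw [SetLike.mem_coe, hzb]; exact hb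
  refine ⟨part1, ?_⟩
  have memφ : ∀ p : C₁ × C₂,
      (fun i => AdjoinRoot.root (X ^ 2 - X : R[X]) * AdjoinRoot.of _ ((p.1 : Fin n → R) i)
        + (1 - AdjoinRoot.root (X ^ 2 - X : R[X])) * AdjoinRoot.of _ ((p.2 : Fin n → R) i))
        ∈ C.restrictScalars R := by
    intro p
    rw [Submodule.restrictScalars_mem, ← SetLike.mem_coe, hdecomp]
    exact ⟨p.1, p.1.2, p.2, p.2.2, rfl⟩
  let φ : (C₁ × C₂) →ₗ[R] (C.restrictScalars R) :=
    { toFun := fun p => ⟨_, memφ p⟩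
      map_add' := by
        intro p q
        apply Subtype.ext
        funext i
        simp only [Prod.fst_add, Prod.snd_add, Submodule.coe_add, Pi.add_apply, map_add]
        ring
      map_smul' := by
        intro r p
        apply Subtype.ext
        funext i
        simp only [Prod.smul_fst, Prod.smul_snd, Submodule.coe_smul, Pi.smul_apply,
          smul_eq_mul, map_mul, RingHom.id_apply, Algebra.smul_def,
          ← AdjoinRoot.algebraMap_eq]
        ring }
  have hinj : Function.Injective φ := by
    intro p q hpq
    have h : ∀ i, AdjoinRoot.root (X ^ 2 - X : R[X]) * AdjoinRoot.of _ ((p.1 : Fin n → R) i)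
        + (1 - AdjoinRoot.root (X ^ 2 - X : R[X])) * AdjoinRoot.of _ ((p.2 : Fin n → R) i)
      = AdjoinRoot.root (X ^ 2 - X : R[X]) * AdjoinRoot.of _ ((q.1 : Fin n → R) i)
        + (1 - AdjoinRoot.root (X ^ 2 - X : R[X])) * AdjoinRoot.of _ ((q.2 : Fin n → R) i) :=
      fun i => congrFun (congrArg Subtype.val hpq) i
    exact Prod.ext (Subtype.ext (funext fun i => (aux_key _ _ _ _ (h i)).1))
      (Subtype.ext (funext fun i => (aux_key _ _ _ _ (h i)).2))
  have hsurj : Function.Surjective φ := by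
    rintro ⟨x, hx⟩
    rw [Submodule.restrictScalars_mem, ← SetLike.mem_coe, hdecomp] at hx
    obtain ⟨a, ha, b, hb, rfl⟩ := hx
    exact ⟨(⟨a, ha⟩, ⟨b, hb⟩), rfl⟩
  exact ⟨(LinearEquiv.ofBijective φ ⟨hinj, hsurj⟩).symm⟩
end

section
/- Let R be a commutative ring, R_1 = R[v]/(v^2 - v), and θ the automorphism of R_1 fixing R with θ(v) = 1 - v. For the skew shift T_θ(c_0,...,c_{n-1}) = (θ(c_{n-1}), θ(c_0), ..., θ(c_{n-2})) on R_1^n, under the identification Ψ̄ : R_1^n ≅ R^n × R^n, T_θ corresponds to the map (x, y) ↦ (σ(y), σ(x)) where σ is the ordinary cyclic shift on R^n. Consequently, a linear code C = Ψ̄^{-1}(C_1 × C_2) satisfies T_θ(C) ⊆ C if and only if σ(C_2) ⊆ C_1 and σ(C_1) ⊆ C_2; in that case C_1 and C_2 are quasi-cyclic codes of index 2 in the sense that σ^2(C_i) ⊆ C_i. -/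
open Polynomial
set_option maxHeartbeats 8000000

/-- With `θ` the automorphism of `R₁` swapping `v` and `1-v` and the skew shift
`T_θ(c) = (θ(c_{n-1}), θ(c_0), …)`: under `Ψ̄ : R₁ⁿ ≅ Rⁿ × Rⁿ`, `T_θ` corresponds to
`(x, y) ↦ (σ(y), σ(x))` with `σ` the cyclic shift; consequently for
`Ψ̄(C) = C₁ × C₂` one has `T_θ(C) ⊆ C ↔ (σ(C₂) ⊆ C₁ ∧ σ(C₁) ⊆ C₂)`, and in that case
`σ²(Cᵢ) ⊆ Cᵢ` for `i = 1, 2`. -/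
theorem stmt16 (R : Type*) [CommRing R] (n : ℕ) [NeZero n]
    (θ : AdjoinRoot (X ^ 2 - X : R[X]) →+* AdjoinRoot (X ^ 2 - X : R[X]))
    (hθR : ∀ a : R, θ (AdjoinRoot.of _ a) = AdjoinRoot.of _ a)
    (hθv : θ (AdjoinRoot.root _) = 1 - AdjoinRoot.root _)
    (Ψ : AdjoinRoot (X ^ 2 - X : R[X]) ≃+* R × R)
    (hΨ : ∀ a b : R,
      Ψ (AdjoinRoot.of _ a + AdjoinRoot.of _ b * AdjoinRoot.root _) = (a, a + b))
    (C : Submodule (AdjoinRoot (X ^ 2 - X : R[X])) (Fin n → AdjoinRoot (X ^ 2 - X : R[X])))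
    (C₁ C₂ : Submodule R (Fin n → R))
    (hC : (C : Set _) = {c : Fin n → AdjoinRoot (X ^ 2 - X : R[X]) | (fun i => (Ψ (c i)).1) ∈ C₁ ∧ (fun i => (Ψ (c i)).2) ∈ C₂}) :
    (∀ c : Fin n → AdjoinRoot (X ^ 2 - X : R[X]),
      (fun i => (Ψ (θ (c (i - 1)))).1) = (fun i => (Ψ (c (i - 1))).2) ∧
      (fun i => (Ψ (θ (c (i - 1)))).2) = (fun i => (Ψ (c (i - 1))).1)) ∧
    (((fun c : Fin n → AdjoinRoot (X ^ 2 - X : R[X]) => fun i => θ (c (i - 1))) ''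
          (C : Set _) ⊆ (C : Set _)) ↔
        ((fun z : Fin n → R => fun i => z (i - 1)) '' (C₂ : Set _) ⊆ (C₁ : Set _) ∧
         (fun z : Fin n → R => fun i => z (i - 1)) '' (C₁ : Set _) ⊆ (C₂ : Set _))) ∧
    (((fun c : Fin n → AdjoinRoot (X ^ 2 - X : R[X]) => fun i => θ (c (i - 1))) ''
          (C : Set _) ⊆ (C : Set _)) →
        ((fun z : Fin n → R => fun i => z (i - 1 - 1)) '' (C₁ : Set _) ⊆ (C₁ : Set _) ∧
         (fun z : Fin n → R => fun i => z (i - 1 - 1)) '' (C₂ : Set _) ⊆ (C₂ : Set _))) := by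
  have key : ∀ x : AdjoinRoot (X ^ 2 - X : R[X]), Ψ (θ x) = ((Ψ x).2, (Ψ x).1) := by
    intro x
    have hx : x = AdjoinRoot.of _ ((Ψ x).1)
        + AdjoinRoot.of _ ((Ψ x).2 - (Ψ x).1) * AdjoinRoot.root _ := by
      apply Ψ.injective
      rw [hΨ]
      simp [Prod.ext_iff]
    conv_lhs => rw [hx]
    rw [map_add, map_mul, hθR, hθR, hθv]
    have h2 : AdjoinRoot.of (X ^ 2 - X : R[X]) ((Ψ x).1)
        + AdjoinRoot.of _ ((Ψ x).2 - (Ψ x).1) * (1 - AdjoinRoot.root _)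
        = AdjoinRoot.of _ ((Ψ x).2)
          + AdjoinRoot.of _ ((Ψ x).1 - (Ψ x).2) * AdjoinRoot.root _ := by
      rw [map_sub, map_sub]; ring
    rw [h2, hΨ]
    simp [Prod.ext_iff]
  -- membership characterization
  have memC : ∀ c, c ∈ C ↔ ((fun i => (Ψ (c i)).1) ∈ C₁ ∧ (fun i => (Ψ (c i)).2) ∈ C₂) := by
    intro c
    rw [← SetLike.mem_coe, hC]; rfl
  have hiff : (((fun c : Fin n → AdjoinRoot (X ^ 2 - X : R[X]) => fun i => θ (c (i - 1))) ''
          (C : Set _) ⊆ (C : Set _)) ↔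
        ((fun z : Fin n → R => fun i => z (i - 1)) '' (C₂ : Set _) ⊆ (C₁ : Set _) ∧
         (fun z : Fin n → R => fun i => z (i - 1)) '' (C₁ : Set _) ⊆ (C₂ : Set _))) := by
    constructor
    · intro h
      constructor
      · rintro _ ⟨z, hz, rfl⟩
        set c : Fin n → AdjoinRoot (X ^ 2 - X : R[X]) := fun i => Ψ.symm (0, z i) with hc
        have hcC : c ∈ C := by
          rw [memC]
          constructor
          · have : (fun i => (Ψ (c i)).1) = (0 : Fin n → R) := by
              funext i; simp [hc]
            rw [this]; exact C₁.zero_mem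
          · have : (fun i => (Ψ (c i)).2) = z := by
              funext i; simp [hc]
            rw [this]; exact hz
        have := h ⟨c, hcC, rfl⟩
        rw [SetLike.mem_coe, memC] at this
        have h1 := this.1
        have e : (fun i => (Ψ (θ (c (i - 1)))).1) = fun i => z (i - 1) := by
          funext i; rw [key]; simp [hc]
        rw [e] at h1; exact h1
      · rintro _ ⟨z, hz, rfl⟩
        set c : Fin n → AdjoinRoot (X ^ 2 - X : R[X]) := fun i => Ψ.symm (z i, 0) with hc
        have hcC : c ∈ C := by
          rw [memC]
          constructor
          · have : (fun i => (Ψ (c i)).1) = z := by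
              funext i; simp [hc]
            rw [this]; exact hz
          · have : (fun i => (Ψ (c i)).2) = (0 : Fin n → R) := by
              funext i; simp [hc]
            rw [this]; exact C₂.zero_mem
        have := h ⟨c, hcC, rfl⟩
        rw [SetLike.mem_coe, memC] at this
        have h2 := this.2
        have e : (fun i => (Ψ (θ (c (i - 1)))).2) = fun i => z (i - 1) := by
          funext i; rw [key]; simp [hc]
        rw [e] at h2; exact h2
    · rintro ⟨h1, h2⟩ _ ⟨c, hcC, rfl⟩
      rw [SetLike.mem_coe, memC] at hcC ⊢
      constructor
      · have e : (fun i => (Ψ (θ (c (i - 1)))).1) = fun i => (Ψ (c (i - 1))).2 := by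
          funext i; rw [key]
        rw [e]
        exact h1 ⟨_, hcC.2, rfl⟩
      · have e : (fun i => (Ψ (θ (c (i - 1)))).2) = fun i => (Ψ (c (i - 1))).1 := by
          funext i; rw [key]
        rw [e]
        exact h2 ⟨_, hcC.1, rfl⟩
  refine ⟨fun c => ⟨funext fun i => by rw [key], funext fun i => by rw [key]⟩, hiff, ?_⟩
  intro h
  obtain ⟨h1, h2⟩ := hiff.mp h
  constructor
  · rintro _ ⟨z, hz, rfl⟩
    exact h1 ⟨fun i => z (i - 1), h2 ⟨z, hz, rfl⟩, rfl⟩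
  · rintro _ ⟨z, hz, rfl⟩
    exact h2 ⟨fun i => z (i - 1), h1 ⟨z, hz, rfl⟩, rfl⟩
end
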